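/- Let A be a nonempty finite type, Θ ≥ 0, and θ : A → EuclideanSpace ℝ (Fin S) with ‖θ a‖ ≤ Θ for all a. Define the Boltzmann log-policy L(a, μ) = ⟪μ, θ a⟫ − log(∑_{a'} exp(⟪μ, θ a'⟫)), where ⟪·,·⟫ denotes the Euclidean inner product. Then for every a ∈ A and every μ, ν ∈ EuclideanSpace ℝ (Fin S), |L(a, μ) − L(a, ν)| ≤ 2Θ ‖μ − ν‖. -/

import Mathlib

private lemma lse_le {A : Type*} [Fintype A] [Nonempty A]
    (f g : A → ℝ) (C : ℝ) (h : ∀ a, f a - g a ≤ C) :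
    Real.log (∑ a, Real.exp (f a)) ≤ Real.log (∑ a, Real.exp (g a)) + C := by
  have hpos : (0:ℝ) < ∑ a, Real.exp (g a) :=
    Finset.sum_pos (fun a _ => Real.exp_pos _) Finset.univ_nonempty
  have hle : (∑ a, Real.exp (f a)) ≤ Real.exp C * ∑ a, Real.exp (g a) := by
    rw [Finset.mul_sum]
    refine Finset.sum_le_sum fun a _ => ?_
    rw [← Real.exp_add]
    exact Real.exp_le_exp.mpr (by linarith [h a])
  calc Real.log (∑ a, Real.exp (f a)) ≤ Real.log (Real.exp C * ∑ a, Real.exp (g a)) :=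
        Real.log_le_log (Finset.sum_pos (fun a _ => Real.exp_pos _) Finset.univ_nonempty) hle
    _ = C + Real.log (∑ a, Real.exp (g a)) := by
        rw [Real.log_mul (Real.exp_ne_zero _) (ne_of_gt hpos), Real.log_exp]
    _ = _ := by ring

theorem boltzmann_log_policy_lipschitz
    (A : Type*) [Fintype A] [Nonempty A] (S : ℕ)
    (Θ : ℝ) (hΘ : 0 ≤ Θ)
    (θ : A → EuclideanSpace ℝ (Fin S)) (hθ : ∀ a, ‖θ a‖ ≤ Θ)
    (L : A → EuclideanSpace ℝ (Fin S) → ℝ)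
    (hL : ∀ a μ, L a μ = (inner ℝ μ (θ a) : ℝ) -
      Real.log (∑ a', Real.exp ((inner ℝ μ (θ a') : ℝ)))) :
    ∀ (a : A) (μ ν : EuclideanSpace ℝ (Fin S)),
      |L a μ - L a ν| ≤ 2 * Θ * ‖μ - ν‖ := by
  intro a μ ν
  have key : ∀ b : A, |(inner ℝ μ (θ b) : ℝ) - (inner ℝ ν (θ b) : ℝ)| ≤ Θ * ‖μ - ν‖ := by
    intro b
    rw [← inner_sub_left]
    calc |(inner ℝ (μ - ν) (θ b) : ℝ)| ≤ ‖μ - ν‖ * ‖θ b‖ := abs_real_inner_le_norm _ _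
      _ ≤ ‖μ - ν‖ * Θ := by
          exact mul_le_mul_of_nonneg_left (hθ b) (norm_nonneg _)
      _ = Θ * ‖μ - ν‖ := mul_comm _ _
  have hlog : |Real.log (∑ a', Real.exp ((inner ℝ μ (θ a') : ℝ))) -
      Real.log (∑ a', Real.exp ((inner ℝ ν (θ a') : ℝ)))| ≤ Θ * ‖μ - ν‖ := by
    rw [abs_le]
    constructor
    · have := lse_le (fun a' => (inner ℝ ν (θ a') : ℝ)) (fun a' => (inner ℝ μ (θ a') : ℝ))
        (Θ * ‖μ - ν‖) (fun b => by
          have := key b; rw [abs_le] at this; linarith [this.1])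
      linarith
    · have := lse_le (fun a' => (inner ℝ μ (θ a') : ℝ)) (fun a' => (inner ℝ ν (θ a') : ℝ))
        (Θ * ‖μ - ν‖) (fun b => (abs_le.mp (key b)).2)
      linarith
  rw [hL, hL]
  have h1 := key a
  calc |((inner ℝ μ (θ a) : ℝ) - Real.log (∑ a', Real.exp ((inner ℝ μ (θ a') : ℝ)))) -
      ((inner ℝ ν (θ a) : ℝ) - Real.log (∑ a', Real.exp ((inner ℝ ν (θ a') : ℝ))))|
      ≤ |(inner ℝ μ (θ a) : ℝ) - (inner ℝ ν (θ a) : ℝ)| +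
        |Real.log (∑ a', Real.exp ((inner ℝ μ (θ a') : ℝ))) -
         Real.log (∑ a', Real.exp ((inner ℝ ν (θ a') : ℝ)))| := by
        have h := abs_sub ((inner ℝ μ (θ a) : ℝ) - (inner ℝ ν (θ a) : ℝ))
          (Real.log (∑ a', Real.exp ((inner ℝ μ (θ a') : ℝ))) -
           Real.log (∑ a', Real.exp ((inner ℝ ν (θ a') : ℝ))))
        calc _ = |((inner ℝ μ (θ a) : ℝ) - (inner ℝ ν (θ a) : ℝ)) -
              (Real.log (∑ a', Real.exp ((inner ℝ μ (θ a') : ℝ))) -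
               Real.log (∑ a', Real.exp ((inner ℝ ν (θ a') : ℝ))))| := by ring_nf
          _ ≤ _ := h
      _ ≤ Θ * ‖μ - ν‖ + Θ * ‖μ - ν‖ := add_le_add h1 hlog
      _ = 2 * Θ * ‖μ - ν‖ := by ring
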